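/- For any symmetric weight function w on pairs from {0,...,n-1} and any fixed linear order of the vertices, the minimum over all partitions into consecutive intervals of the weighted editing cost is attained, and opt(n-1) as computed by the recurrence equals this minimum. -/

import Mathlib

open Finset

def samePartN {s : Finset ℕ} (P : Finpartition s) (a b : ℕ) : Prop :=
  ∃ t ∈ P.parts, a ∈ t ∧ b ∈ t

instance {s : Finset ℕ} (P : Finpartition s) (a b : ℕ) : Decidable (samePartN P a b) := by
  unfold samePartN; infer_instance

/-- A partition into sets of consecutive integers. -/
def IsConsecPartition {s : Finset ℕ} (P : Finpartition s) : Prop :=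
  ∀ t ∈ P.parts, ∀ a ∈ t, ∀ b ∈ t, ∀ c, a ≤ c → c ≤ b → c ∈ t

/-- Weighted editing cost of a partition: `w⁻` for same-part pairs, `w⁺` for
cross-part pairs. -/
noncomputable def pcost (w : ℕ → ℕ → ℝ) (s : Finset ℕ) (P : Finpartition s) : ℝ :=
  ∑ b ∈ s, ∑ a ∈ s.filter (· < b),
    if samePartN P a b then max (-w a b) 0 else max (w a b) 0

/-- The dynamic programming table: `optRow w j i` is `opt'(j,i)` computed by the
recurrences `opt'(j,0) = opt(j-1) + Σ_{k<j} w⁺(j,k)`,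
`opt'(j,i) = opt'(j-1,i-1) + Σ_{k<j-i} w⁺(j,k) + Σ_{k=j-i}^{j-1} w⁻(j,k)`,
where `opt(j) = min_{0 ≤ i ≤ j} opt'(j,i)`. -/
noncomputable def optRow (w : ℕ → ℕ → ℝ) : ℕ → ℕ → ℝ
  | 0, _ => 0
  | j + 1, 0 =>
      (Finset.range (j + 1)).inf' (Finset.nonempty_range_iff.mpr (Nat.succ_ne_zero j)) (fun i => optRow w j i) +
        ∑ k ∈ Finset.range (j + 1), max (w (j + 1) k) 0
  | j + 1, i + 1 =>
      optRow w j i + ∑ k ∈ Finset.range (j + 1 - (i + 1)), max (w (j + 1) k) 0 +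
        ∑ k ∈ Finset.Ico (j + 1 - (i + 1)) (j + 1), max (-w (j + 1) k) 0

/-- cost contributed by the block `Ico m n` being last. -/
noncomputable def Cw (w : ℕ → ℕ → ℝ) (m n : ℕ) : ℝ :=
  ∑ b ∈ Ico m n, (∑ a ∈ range m, max (w a b) 0 + ∑ a ∈ Ico m b, max (-w a b) 0)

noncomputable def optm (w : ℕ → ℕ → ℝ) : ℕ → ℝ
  | 0 => 0
  | n + 1 => (range (n + 1)).inf' nonempty_range_add_one (fun i => optRow w n i)

lemma optRow_eq (w : ℕ → ℕ → ℝ) (hw : ∀ a b, w a b = w b a) :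
    ∀ j i, i ≤ j → optRow w j i = optm w (j - i) + Cw w (j - i) (j + 1) := by
  intro j
  induction j with
  | zero =>
      intro i hi
      interval_cases i
      simp [optRow, optm, Cw]
  | succ j ih =>
      intro i hi
      match i with
      | 0 =>
          have h1 : Cw w (j + 1) (j + 2) = ∑ k ∈ range (j + 1), max (w (j + 1) k) 0 := by
            rw [Cw, show Ico (j+1) (j+2) = {j+1} from by ext x; rw [Finset.mem_Ico, Finset.mem_singleton]; omega,
              Finset.sum_singleton, Finset.Ico_self, Finset.sum_empty, add_zero]
            exact Finset.sum_congr rfl fun a _ => by rw [hw]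
          simp only [optRow, optm, Nat.sub_zero, h1]
      | i + 1 =>
          have hij : i ≤ j := by omega
          have hm : j + 1 - (i + 1) = j - i := by omega
          have hle : j - i ≤ j + 1 := by omega
          have h2 : Cw w (j - i) (j + 2) = Cw w (j - i) (j + 1)
              + (∑ k ∈ range (j - i), max (w (j + 1) k) 0
                + ∑ k ∈ Ico (j - i) (j + 1), max (-w (j + 1) k) 0) := by
            rw [Cw, Cw, Finset.sum_Ico_succ_top hle]
            congr 1
            congr 1
            · exact Finset.sum_congr rfl fun a _ => by rw [hw]
            · exact Finset.sum_congr rfl fun a _ => by rw [hw]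
          rw [show optRow w (j+1) (i+1) = optRow w j i
              + ∑ k ∈ Finset.range (j + 1 - (i + 1)), max (w (j + 1) k) 0
              + ∑ k ∈ Finset.Ico (j + 1 - (i + 1)) (j + 1), max (-w (j + 1) k) 0 from rfl,
            ih i hij, hm, h2]
          ring

lemma optm_succ (w : ℕ → ℕ → ℝ) (hw : ∀ a b, w a b = w b a) (n : ℕ) :
    optm w (n + 1)
      = (range (n + 1)).inf' nonempty_range_add_one (fun m => optm w m + Cw w m (n + 1)) := by
  show (range (n + 1)).inf' nonempty_range_add_one (fun i => optRow w n i) = _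
  apply le_antisymm
  · apply Finset.le_inf'
    intro m hm
    rw [Finset.mem_range] at hm
    have h := optRow_eq w hw n (n - m) (by omega)
    rw [show n - (n - m) = m from by omega] at h
    exact h ▸ Finset.inf'_le _ (Finset.mem_range.mpr (by omega))
  · apply Finset.le_inf'
    intro i hi
    rw [Finset.mem_range] at hi
    rw [optRow_eq w hw n i (by omega)]
    exact Finset.inf'_le _ (Finset.mem_range.mpr (by omega))

lemma exists_restrict {n m : ℕ} (P : Finpartition (range n)) (hP : Ico m n ∈ P.parts) :
    ∃ Q : Finpartition (range m), Q.parts = P.parts.erase (Ico m n) := by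
  have hdisj : Disjoint (Ico m n) ((P.parts.erase (Ico m n)).sup id) :=
    P.supIndep (Finset.erase_subset _ _) hP (Finset.notMem_erase _ _)
  have hsup : Ico m n ⊔ (P.parts.erase (Ico m n)).sup id = range n := by
    conv_rhs => rw [← P.sup_parts, ← Finset.insert_erase hP]
    rw [Finset.sup_insert]
    rfl
  have key : (P.parts.erase (Ico m n)).sup id = range m := by
    ext a
    rw [Finset.mem_range]
    constructor
    · intro ha
      have h1 : a ∈ range n := by
        rw [← hsup, Finset.sup_eq_union, Finset.mem_union]; exact Or.inr ha
      have h2 : a ∉ Ico m n := fun h => (Finset.disjoint_left.mp hdisj h) ha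
      rw [Finset.mem_range] at h1
      rw [Finset.mem_Ico] at h2
      omega
    · intro ha
      have h1 : a ∈ Ico m n ⊔ (P.parts.erase (Ico m n)).sup id := by
        rw [hsup, Finset.mem_range]
        have : m ≤ n := by
          by_contra h
          exact P.bot_notMem (by rwa [show (Ico m n : Finset ℕ) = ⊥ from
            Finset.Ico_eq_empty (by omega)] at hP)
        omega
      rw [Finset.sup_eq_union, Finset.mem_union] at h1
      rcases h1 with h1 | h1
      · rw [Finset.mem_Ico] at h1; omega
      · exact h1
  exact ⟨⟨P.parts.erase (Ico m n), P.supIndep.subset (Finset.erase_subset _ _), key,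
    fun h => P.bot_notMem (Finset.mem_of_mem_erase h)⟩, rfl⟩

lemma pcost_eq (w : ℕ → ℕ → ℝ) (N : ℕ) (P : Finpartition (range N)) :
    pcost w (range N) P = ∑ b ∈ range N, ∑ a ∈ range b,
      (if samePartN P a b then max (-w a b) 0 else max (w a b) 0) := by
  rw [pcost]
  apply Finset.sum_congr rfl
  intro b hb
  rw [Finset.mem_range] at hb
  apply Finset.sum_congr _ (fun _ _ => rfl)
  ext a
  simp only [Finset.mem_filter, Finset.mem_range]
  omega

lemma pcost_split (w : ℕ → ℕ → ℝ) {m n : ℕ} (hmn : m < n)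
    (P : Finpartition (range n)) (hP : Ico m n ∈ P.parts)
    (Q : Finpartition (range m)) (hQ : Q.parts = P.parts.erase (Ico m n)) :
    pcost w (range n) P = pcost w (range m) Q + Cw w m n := by
  rw [pcost_eq, pcost_eq]
  have hsplit : ∑ b ∈ range n, ∑ a ∈ range b,
      (if samePartN P a b then max (-w a b) 0 else max (w a b) 0)
      = (∑ b ∈ range m, ∑ a ∈ range b,
          (if samePartN P a b then max (-w a b) 0 else max (w a b) 0))
        + ∑ b ∈ Ico m n, ∑ a ∈ range b,
          (if samePartN P a b then max (-w a b) 0 else max (w a b) 0) := by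
    rw [← Finset.sum_range_add_sum_Ico _ (le_of_lt hmn)]
  rw [hsplit]
  congr 1
  · -- same-part equivalence below m
    apply Finset.sum_congr rfl
    intro b hb
    rw [Finset.mem_range] at hb
    apply Finset.sum_congr rfl
    intro a ha
    rw [Finset.mem_range] at ha
    have : samePartN P a b ↔ samePartN Q a b := by
      constructor
      · rintro ⟨t, ht, hat, hbt⟩
        refine ⟨t, ?_, hat, hbt⟩
        rw [hQ, Finset.mem_erase]
        refine ⟨?_, ht⟩
        rintro rfl
        rw [Finset.mem_Ico] at hbt
        omega
      · rintro ⟨t, ht, hat, hbt⟩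
        exact ⟨t, Finset.mem_of_mem_erase (hQ ▸ ht), hat, hbt⟩
    rw [if_congr this rfl rfl]
  · -- last-block contribution
    rw [Cw]
    apply Finset.sum_congr rfl
    intro b hb
    rw [Finset.mem_Ico] at hb
    have hbr : range b = range m ∪ Ico m b := by
      ext x
      simp only [Finset.mem_union, Finset.mem_range, Finset.mem_Ico]
      omega
    have hdisj : Disjoint (range m) (Ico m b) := by
      rw [Finset.disjoint_left]
      intro x hx hx'
      rw [Finset.mem_range] at hx
      rw [Finset.mem_Ico] at hx'
      omega
    rw [hbr, Finset.sum_union hdisj]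
    congr 1
    · apply Finset.sum_congr rfl
      intro a ha
      rw [Finset.mem_range] at ha
      have : ¬ samePartN P a b := by
        rintro ⟨t, ht, hat, hbt⟩
        have := P.eq_of_mem_parts ht hP hbt (Finset.mem_Ico.mpr ⟨hb.1, hb.2⟩)
        subst this
        rw [Finset.mem_Ico] at hat
        omega
      rw [if_neg this]
    · apply Finset.sum_congr rfl
      intro a ha
      rw [Finset.mem_Ico] at ha
      have : samePartN P a b :=
        ⟨Ico m n, hP, Finset.mem_Ico.mpr ⟨ha.1, by omega⟩, Finset.mem_Ico.mpr ⟨hb.1, hb.2⟩⟩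
      rw [if_pos this]

lemma part_of_top {n : ℕ} (Q : Finpartition (range (n + 1))) (hc : IsConsecPartition Q) :
    ∃ m, m ≤ n ∧ Ico m (n + 1) ∈ Q.parts := by
  obtain ⟨t, ht, hnt⟩ := Q.exists_mem (Finset.mem_range.mpr (Nat.lt_succ_self n))
  have htne : t.Nonempty := ⟨n, hnt⟩
  refine ⟨t.min' htne, t.min'_le n hnt, ?_⟩
  have heq : t = Ico (t.min' htne) (n + 1) := by
    ext x
    rw [Finset.mem_Ico]
    constructor
    · intro hx
      refine ⟨t.min'_le x hx, ?_⟩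
      have := Finset.mem_range.mp (Q.le ht hx)
      omega
    · rintro ⟨h1, h2⟩
      exact hc t ht _ (t.min'_mem htne) n hnt x h1 (by omega)
  rw [← heq]
  exact ht

lemma optm_is_min (w : ℕ → ℕ → ℝ) (hw : ∀ a b, w a b = w b a) :
    ∀ n : ℕ,
      (∃ P : Finpartition (range n), IsConsecPartition P
        ∧ pcost w (range n) P = optm w n)
      ∧ ∀ Q : Finpartition (range n), IsConsecPartition Q →
          optm w n ≤ pcost w (range n) Q := by
  intro n
  induction n using Nat.strong_induction_on with
  | _ n ih =>
    match n with
    | 0 =>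
      constructor
      · refine ⟨(Finpartition.empty (Finset ℕ)).copy (by simp), ?_, ?_⟩
        · intro t ht
          simp [Finpartition.empty] at ht
        · simp [pcost, optm]
      · intro Q _
        simp [pcost, optm]
    | n + 1 =>
      obtain ⟨m0, hm0mem, hm0⟩ := Finset.exists_mem_eq_inf'
        (nonempty_range_add_one (n := n)) (fun m => optm w m + Cw w m (n + 1))
      rw [Finset.mem_range] at hm0mem
      obtain ⟨⟨Pm, hPmc, hPmval⟩, -⟩ := ih m0 (by omega)
      have hb : (Ico m0 (n + 1) : Finset ℕ) ≠ ⊥ := by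
        rw [Finset.bot_eq_empty, ← Finset.nonempty_iff_ne_empty]
        exact Finset.nonempty_Ico.mpr (by omega)
      have hab : Disjoint (range m0) (Ico m0 (n + 1)) := by
        rw [Finset.disjoint_left]
        intro x hx hx'
        rw [Finset.mem_range] at hx
        rw [Finset.mem_Ico] at hx'
        omega
      have hcsup : (range m0) ⊔ (Ico m0 (n + 1)) = range (n + 1) := by
        rw [Finset.sup_eq_union]
        ext x
        simp only [Finset.mem_union, Finset.mem_range, Finset.mem_Ico]
        omega
      set P := Pm.extend hb hab hcsup with hPdef
      have hparts : P.parts = insert (Ico m0 (n + 1)) Pm.parts := rfl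
      have hnotmem : Ico m0 (n + 1) ∉ Pm.parts := by
        intro h
        have := Finset.mem_range.mp (Pm.le h (Finset.mem_Ico.mpr ⟨le_refl m0, by omega⟩))
        omega
      have hPc : IsConsecPartition P := by
        intro t ht a hat b hbt c h1 h2
        rw [hparts, Finset.mem_insert] at ht
        rcases ht with rfl | ht
        · rw [Finset.mem_Ico] at *
          omega
        · exact hPmc t ht a hat b hbt c h1 h2
      have herase : Pm.parts = P.parts.erase (Ico m0 (n + 1)) := by
        rw [hparts, Finset.erase_insert hnotmem]
      have hcost : pcost w (range (n + 1)) P = pcost w (range m0) Pm + Cw w m0 (n + 1) :=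
        pcost_split w (by omega) P (hparts ▸ Finset.mem_insert_self _ _) Pm herase
      have hPval : pcost w (range (n + 1)) P = optm w (n + 1) := by
        rw [hcost, hPmval, optm_succ w hw n, hm0]
      refine ⟨⟨P, hPc, hPval⟩, ?_⟩
      intro Q hQc
      obtain ⟨m', hm'le, hIQ⟩ := part_of_top Q hQc
      obtain ⟨Q', hQ'⟩ := exists_restrict Q hIQ
      have hQ'c : IsConsecPartition Q' := fun t ht =>
        hQc t (Finset.mem_of_mem_erase (hQ' ▸ ht))
      have hIH := (ih m' (by omega)).2 Q' hQ'c
      have hsplit := pcost_split w (show m' < n + 1 by omega) Q hIQ Q' hQ'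
      have hle2 : optm w (n + 1) ≤ optm w m' + Cw w m' (n + 1) := by
        rw [optm_succ w hw n]
        exact Finset.inf'_le _ (Finset.mem_range.mpr (by omega))
      rw [hsplit]
      linarith

/-- The minimum weighted editing cost over consecutive-interval partitions is attained,
and `opt(n-1)` as computed by the recurrence equals this minimum. -/
theorem dp_computes_minimum (w : ℕ → ℕ → ℝ) (hw : ∀ a b, w a b = w b a)
    (n : ℕ) (hn : 1 ≤ n) :
    ∃ P : Finpartition (Finset.range n), IsConsecPartition P ∧
      (∀ Q : Finpartition (Finset.range n), IsConsecPartition Q →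
        pcost w (Finset.range n) P ≤ pcost w (Finset.range n) Q) ∧
      (Finset.range n).inf' (Finset.nonempty_range_iff.mpr (by omega))
          (fun i => optRow w (n - 1) i)
        = pcost w (Finset.range n) P := by
  obtain ⟨m, rfl⟩ : ∃ m, n = m + 1 := ⟨n - 1, by omega⟩
  obtain ⟨⟨P, hPc, hPval⟩, hmin⟩ := optm_is_min w hw (m + 1)
  refine ⟨P, hPc, ?_, ?_⟩
  · intro Q hQ
    rw [hPval]
    exact hmin Q hQ
  · rw [hPval]
    rfl
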